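/- Let f be given by an admissible representation f(z) = (−2π/(a·log z))·(1 + Σ_{n≥1} Φ_n(z)/(log z)^n). Then there exists ε > 0 such that f is injective on the punctured closed half-disk { z ∈ ℂ : 0 < |z| ≤ ε, Im z ≥ 0 }; in particular f is univalent on the open half-disk D⁺_ε = { z : |z| < ε, Im z > 0 }. -/

import Mathlib

open Complex Filter Topology


/- ### auxiliary summation lemmas -/

lemma abs_tsum_le {f : ℕ → ℂ} {g : ℕ → ℝ} (hg : Summable g)
    (h : ∀ n, ‖f n‖ ≤ g n) :
    ‖∑' n, f n‖ ≤ ∑' n, g n := by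
  have hf : Summable fun n => ‖f n‖ := hg.of_nonneg_of_le (fun n => norm_nonneg _) h
  calc ‖∑' n, f n‖ = ‖∑' n, f n‖ := rfl
    _ ≤ ∑' n, ‖f n‖ := norm_tsum_le_tsum_norm hf
    _ ≤ ∑' n, g n := Summable.tsum_le_tsum h hf hg

lemma geom_half_summable : Summable (fun n : ℕ => ((1:ℝ)/2) ^ n) :=
  summable_geometric_of_lt_one (by norm_num) (by norm_num)

lemma geom_half_tsum : ∑' n : ℕ, ((1:ℝ)/2) ^ n = 2 := by
  rw [tsum_geometric_of_lt_one (by norm_num) (by norm_num)]; norm_num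

lemma coe_mul_geom_half_summable : Summable (fun n : ℕ => (n:ℝ) * ((1:ℝ)/2) ^ n) := by
  have := summable_pow_mul_geometric_of_norm_lt_one (R := ℝ) 1 (r := 1/2)
    (by rw [Real.norm_eq_abs, _root_.abs_of_nonneg] <;> norm_num)
  simpa using this

lemma succ_mul_geom_half_summable : Summable (fun n : ℕ => ((n:ℝ)+1) * ((1:ℝ)/2) ^ n) := by
  have := coe_mul_geom_half_summable.add geom_half_summable
  simpa [add_mul] using this

lemma succ_mul_geom_half_tsum : ∑' n : ℕ, ((n:ℝ)+1) * ((1:ℝ)/2) ^ n = 4 := by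
  have h1 : ∑' n : ℕ, ((n:ℝ) * ((1:ℝ)/2) ^ n + ((1:ℝ)/2) ^ n) = 2 + 2 := by
    rw [Summable.tsum_add coe_mul_geom_half_summable geom_half_summable, geom_half_tsum,
      tsum_coe_mul_geometric_of_norm_lt_one
        (by rw [Real.norm_eq_abs, _root_.abs_of_nonneg] <;> norm_num)]
    norm_num
  calc ∑' n : ℕ, ((n:ℝ)+1) * ((1:ℝ)/2) ^ n
      = ∑' n : ℕ, ((n:ℝ) * ((1:ℝ)/2) ^ n + ((1:ℝ)/2) ^ n) := by
        congr 1; funext n; ring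
    _ = 4 := by rw [h1]; norm_num

/- ### mean value theorem bounds -/

lemma pow_diff_bound {e : ℝ} (k : ℕ) {z1 z2 : ℂ}
    (h1 : ‖z1‖ ≤ e) (h2 : ‖z2‖ ≤ e) :
    ‖z1 ^ (k+1) - z2 ^ (k+1)‖ ≤ ((k:ℝ)+1) * e ^ k * ‖z1 - z2‖ := by
  have hconv : Convex ℝ (Metric.closedBall (0:ℂ) e) := convex_closedBall _ _
  have hmem1 : z1 ∈ Metric.closedBall (0:ℂ) e := by
    simpa [Metric.mem_closedBall, Complex.dist_eq] using h1
  have hmem2 : z2 ∈ Metric.closedBall (0:ℂ) e := by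
    simpa [Metric.mem_closedBall, Complex.dist_eq] using h2
  have := hconv.norm_image_sub_le_of_norm_hasDerivWithin_le
    (f := fun z : ℂ => z ^ (k+1)) (f' := fun z : ℂ => ((k:ℂ)+1) * z ^ k)
    (C := ((k:ℝ)+1) * e ^ k)
    (fun x _ => by
      have := (hasDerivAt_pow (k+1) x).hasDerivWithinAt
        (s := Metric.closedBall (0:ℂ) e)
      simpa using this)
    (fun x hx => by
      have hxe : ‖x‖ ≤ e := by
        simpa [Metric.mem_closedBall, Complex.dist_eq] using hx
      have heq : ‖((k:ℂ)+1) * x ^ k‖ = ((k:ℝ)+1) * (‖x‖) ^ k := by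
        rw [norm_mul, norm_pow]
        congr 1
        rw [show ((k:ℂ)+1) = ((k+1:ℕ):ℂ) by push_cast; ring, Complex.norm_natCast]
        push_cast; ring
      rw [heq]
      gcongr)
    hmem2 hmem1
  simpa using this

lemma exp_diff_bound {t : ℝ} {z1 z2 : ℂ} (h1 : z1.re ≤ t) (h2 : z2.re ≤ t) :
    ‖Complex.exp z1 - Complex.exp z2‖ ≤ Real.exp t * ‖z1 - z2‖ := by
  have hconv : Convex ℝ {z : ℂ | z.re ≤ t} := convex_halfSpace_re_le t
  have := hconv.norm_image_sub_le_of_norm_hasDerivWithin_le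
    (f := Complex.exp) (f' := Complex.exp) (C := Real.exp t)
    (fun x _ => (Complex.hasDerivAt_exp x).hasDerivWithinAt)
    (fun x hx => by
      rw [Complex.norm_exp]
      exact Real.exp_le_exp.2 hx)
    h2 h1
  simpa using this

lemma inv_pow_diff_bound {t : ℝ} (ht : 0 < t) (m : ℕ) {z1 z2 : ℂ}
    (h1 : z1.re ≤ -t) (h2 : z2.re ≤ -t) :
    ‖(z1 ^ (m+1))⁻¹ - (z2 ^ (m+1))⁻¹‖
      ≤ ((m:ℝ)+1) / t ^ (m+2) * ‖z1 - z2‖ := by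
  have hconv : Convex ℝ {z : ℂ | z.re ≤ -t} := convex_halfSpace_re_le (-t)
  have hne : ∀ x : ℂ, x ∈ {z : ℂ | z.re ≤ -t} → x ≠ 0 := by
    intro x hx h0
    rw [h0] at hx
    simp only [Set.mem_setOf_eq, Complex.zero_re] at hx
    linarith
  have habs : ∀ x : ℂ, x ∈ {z : ℂ | z.re ≤ -t} → t ≤ ‖x‖ := by
    intro x hx
    simp only [Set.mem_setOf_eq] at hx
    calc t ≤ -x.re := by linarith
      _ ≤ |x.re| := neg_le_abs _
      _ ≤ ‖x‖ := Complex.abs_re_le_norm x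
  have hzrw : ∀ z : ℂ, z ^ (-((m:ℤ)+1)) = (z ^ (m+1))⁻¹ := by
    intro z
    rw [zpow_neg, show ((m:ℤ)+1) = ((m+1:ℕ):ℤ) by push_cast; ring, zpow_natCast]
  have key := hconv.norm_image_sub_le_of_norm_hasDerivWithin_le
    (f := fun z : ℂ => z ^ (-((m:ℤ)+1)))
    (f' := fun z : ℂ => ((-((m:ℤ)+1) : ℤ) : ℂ) * z ^ ((-((m:ℤ)+1)) - 1))
    (C := ((m:ℝ)+1) / t ^ (m+2))
    (fun x hx => (hasDerivAt_zpow (-((m:ℤ)+1)) x (Or.inl (hne x hx))).hasDerivWithinAt)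
    (fun x hx => by
      have hxt := habs x hx
      rw [norm_mul, norm_zpow,
        Complex.norm_intCast]
      have e1 : |((-((m:ℤ)+1) : ℤ) : ℝ)| = (m:ℝ)+1 := by
        push_cast
        rw [abs_neg]
        exact _root_.abs_of_nonneg (by positivity)
      have e2 : ‖x‖ ^ ((-((m:ℤ)+1)) - 1) = (‖x‖ ^ (m+2))⁻¹ := by
        rw [show (-((m:ℤ)+1)) - 1 = -((m+2:ℕ):ℤ) by push_cast; ring, zpow_neg, zpow_natCast]
      rw [e1, e2, div_eq_mul_inv]
      gcongr)
    h2 h1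
  simp only [hzrw] at key
  exact key

/- ### coefficient bounds and Phi estimates -/

lemma abs_le_pow_of_rpow_le {x B : ℝ} (hx : 0 ≤ x) {k : ℕ} (hk : 1 ≤ k)
    (h : x ^ ((1:ℝ)/(k:ℝ)) ≤ B) : x ≤ B ^ k := by
  have hk0 : ((k:ℝ)) ≠ 0 := by positivity
  have h1 : x = (x ^ ((1:ℝ)/(k:ℝ))) ^ (k:ℝ) := by
    rw [← Real.rpow_mul hx, one_div_mul_cancel hk0, Real.rpow_one]
  calc x = (x ^ ((1:ℝ)/(k:ℝ))) ^ (k:ℝ) := h1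
    _ ≤ B ^ (k:ℝ) := Real.rpow_le_rpow (Real.rpow_nonneg hx _) h (by positivity)
    _ = B ^ k := Real.rpow_natCast B k

lemma phi_summable_abs {d : ℕ → ℝ} {B e : ℝ} (hB : 1 ≤ B) (hBe : B * e ≤ 1/2)
    (he : 0 ≤ e) (hc : ∀ k, 1 ≤ k → |d k| ≤ B ^ k) {z : ℂ} (hz : ‖z‖ ≤ e) :
    Summable (fun k : ℕ => ‖(d k : ℂ) * z ^ k‖) := by
  rw [← summable_nat_add_iff 1]
  apply Summable.of_nonneg_of_le (fun k => norm_nonneg _)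
    (f := fun k : ℕ => ((1:ℝ)/2) ^ (k+1))
  · intro k
    have hd := hc (k+1) (by omega)
    have hz' : ‖z‖ ^ (k+1) ≤ e ^ (k+1) :=
      pow_le_pow_left₀ (norm_nonneg _) hz _
    calc ‖(d (k+1) : ℂ) * z ^ (k+1)‖
        = |d (k+1)| * ‖z‖ ^ (k+1) := by
          rw [norm_mul, norm_pow, Complex.norm_real, Real.norm_eq_abs]
      _ ≤ B ^ (k+1) * e ^ (k+1) := by
          apply mul_le_mul hd hz' (by positivity) (by positivity)
      _ = (B * e) ^ (k+1) := (mul_pow _ _ _).symm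
      _ ≤ ((1:ℝ)/2) ^ (k+1) := by
          apply pow_le_pow_left₀ (by positivity) hBe
  · exact (summable_nat_add_iff 1).2 geom_half_summable

lemma phi_diff_bound {d : ℕ → ℝ} {B e : ℝ} (hB : 1 ≤ B) (hBe : B * e ≤ 1/2)
    (he : 0 ≤ e) (hc : ∀ k, 1 ≤ k → |d k| ≤ B ^ k) {z1 z2 : ℂ}
    (h1 : ‖z1‖ ≤ e) (h2 : ‖z2‖ ≤ e) :
    ‖(∑' k : ℕ, (d k : ℂ) * z1 ^ k) - ∑' k : ℕ, (d k : ℂ) * z2 ^ k‖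
      ≤ 4 * B * ‖z1 - z2‖ := by
  have hs1 : Summable (fun k : ℕ => (d k : ℂ) * z1 ^ k) :=
    Summable.of_norm (phi_summable_abs hB hBe he hc h1)
  have hs2 : Summable (fun k : ℕ => (d k : ℂ) * z2 ^ k) :=
    Summable.of_norm (phi_summable_abs hB hBe he hc h2)
  have hdiff : (∑' k : ℕ, (d k : ℂ) * z1 ^ k) - (∑' k : ℕ, (d k : ℂ) * z2 ^ k)
      = ∑' k : ℕ, (d k : ℂ) * (z1 ^ k - z2 ^ k) := by
    rw [← Summable.tsum_sub hs1 hs2]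
    congr 1; funext k; ring
  rw [hdiff]
  have hgsum : Summable (fun k : ℕ => 2*B*‖z1-z2‖ * ((k:ℝ) * ((1:ℝ)/2)^k)) :=
    coe_mul_geom_half_summable.mul_left _
  have hterm : ∀ k : ℕ, ‖(d k : ℂ) * (z1 ^ k - z2 ^ k)‖
      ≤ 2*B*‖z1-z2‖ * ((k:ℝ) * ((1:ℝ)/2)^k) := by
    intro k
    cases k with
    | zero => simp
    | succ j =>
      have hd := hc (j+1) (by omega)
      have hpd := pow_diff_bound j h1 h2
      calc ‖(d (j+1) : ℂ) * (z1 ^ (j+1) - z2 ^ (j+1))‖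
          = |d (j+1)| * ‖z1 ^ (j+1) - z2 ^ (j+1)‖ := by
            rw [norm_mul, Complex.norm_real, Real.norm_eq_abs]
        _ ≤ B ^ (j+1) * (((j:ℝ)+1) * e ^ j * ‖z1 - z2‖) := by
            apply mul_le_mul hd hpd (norm_nonneg _) (by positivity)
        _ = (((j:ℝ)+1) * (B ^ j * e ^ j)) * (B * ‖z1 - z2‖) := by ring
        _ ≤ (((j:ℝ)+1) * ((1:ℝ)/2) ^ j) * (B * ‖z1 - z2‖) := by
            have : B ^ j * e ^ j = (B*e) ^ j := (mul_pow _ _ _).symm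
            rw [this]
            have h2' : (B*e) ^ j ≤ ((1:ℝ)/2) ^ j := pow_le_pow_left₀ (by positivity) hBe _
            gcongr
        _ = 2*B*‖z1-z2‖ * (((j:ℝ)+1) * ((1:ℝ)/2)^(j+1)) := by
            rw [pow_succ]; ring
        _ = 2*B*‖z1-z2‖ * (((j+1:ℕ):ℝ) * ((1:ℝ)/2)^(j+1)) := by push_cast; ring
  calc ‖∑' k : ℕ, (d k : ℂ) * (z1 ^ k - z2 ^ k)‖
      ≤ ∑' k : ℕ, 2*B*‖z1-z2‖ * ((k:ℝ) * ((1:ℝ)/2)^k) :=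
        abs_tsum_le hgsum hterm
    _ = 2*B*‖z1-z2‖ * ∑' k : ℕ, ((k:ℝ) * ((1:ℝ)/2)^k) := tsum_mul_left
    _ = 2*B*‖z1-z2‖ * 2 := by
        rw [tsum_coe_mul_geometric_of_norm_lt_one
          (by rw [Real.norm_eq_abs, _root_.abs_of_nonneg] <;> norm_num)]
        norm_num
    _ = 4 * B * ‖z1 - z2‖ := by ring

/-- `Phi c n z = Σ_{k≥0} c_{n,k} z^k`. -/
noncomputable def Phi (c : ℕ → ℕ → ℝ) (n : ℕ) (z : ℂ) : ℂ :=
  ∑' k : ℕ, (c n k : ℂ) * z ^ k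

/-- Termwise derivative `Σ_{k≥1} k·c_{n,k} z^{k-1}`. -/
noncomputable def PhiD (c : ℕ → ℕ → ℝ) (n : ℕ) (z : ℂ) : ℂ :=
  ∑' k : ℕ, ((k + 1 : ℕ) : ℂ) * (c n (k + 1) : ℂ) * z ^ k

/-- `f(z) = (−2π/(a·log z))·(1 + Σ_{n≥1} Φ_n(z)/(log z)^n)`, where `Complex.log`
is the branch with `log i = iπ/2`, continuous on the closed upper half-plane minus `0`. -/
noncomputable def fRep (a : ℝ) (c : ℕ → ℕ → ℝ) (z : ℂ) : ℂ :=
  (-(2 * (Real.pi : ℂ)) / ((a : ℂ) * Complex.log z)) *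
    (1 + ∑' n : ℕ, Phi c (n + 1) z / (Complex.log z) ^ (n + 1))

/-- Admissibility of the representation `fRep a c`. -/
def Admissible (a : ℝ) (c : ℕ → ℕ → ℝ) : Prop :=
  0 < a ∧
  (∃ B : ℝ, ∀ n : ℕ, 1 ≤ n → ∀ k : ℕ, 1 ≤ k → |c n k| ^ ((1 : ℝ) / (k : ℝ)) ≤ B) ∧
  (∃ r > (0 : ℝ), ∃ M > (0 : ℝ), ∀ n : ℕ, 1 ≤ n → ∀ z : ℂ,
      ‖z‖ ≤ r → 0 ≤ z.im → ‖Phi c n z‖ ≤ M ^ n) ∧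
  (∃ r > (0 : ℝ), ∃ M > (0 : ℝ), ∀ n : ℕ, 1 ≤ n → ∀ z : ℂ,
      ‖z‖ ≤ r → 0 ≤ z.im → ‖PhiD c n z‖ ≤ M ^ n) ∧
  c 1 0 ≠ 0

set_option maxHeartbeats 3200000 in
/-- An admissible representation is univalent on a small punctured closed upper half-disk. -/
theorem stmt11 (a : ℝ) (c : ℕ → ℕ → ℝ) (hadm : Admissible a c) :
    ∃ ε > (0 : ℝ), Set.InjOn (fRep a c)
      {z : ℂ | 0 < ‖z‖ ∧ ‖z‖ ≤ ε ∧ 0 ≤ z.im} := by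
  obtain ⟨ha, ⟨B0, hB0⟩, ⟨r1, hr1pos, M1, hM1pos, hPhiB⟩, -, -⟩ := hadm
  set B : ℝ := max B0 1 with hBdef
  have hB1 : (1:ℝ) ≤ B := le_max_right _ _
  set M : ℝ := max M1 1 with hMdef
  have hM1le : (1:ℝ) ≤ M := le_max_right _ _
  have hMpos : (0:ℝ) < M := lt_of_lt_of_le one_pos hM1le
  -- coefficient bound
  have hcoef : ∀ n : ℕ, 1 ≤ n → ∀ k : ℕ, 1 ≤ k → |c n k| ≤ B ^ k := by
    intro n hn k hk
    exact abs_le_pow_of_rpow_le (abs_nonneg _) hk ((hB0 n hn k hk).trans (le_max_left _ _))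
  -- Phi bound with M
  have habsPhi : ∀ n : ℕ, 1 ≤ n → ∀ z : ℂ, ‖z‖ ≤ r1 → 0 ≤ z.im →
      ‖Phi c n z‖ ≤ M ^ n := by
    intro n hn z hz him
    exact (hPhiB n hn z hz him).trans (pow_le_pow_left₀ hM1pos.le (le_max_left _ _) n)
  -- choice of constants
  set T : ℝ := max (64*M + 4) (max Real.pi (Real.log (128*B))) with hTdef
  have hT64 : 64*M + 4 ≤ T := le_max_left _ _
  have hTpi : Real.pi ≤ T := le_trans (le_max_left _ _) (le_max_right _ _)
  have hTlog : Real.log (128*B) ≤ T := le_trans (le_max_right _ _) (le_max_right _ _)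
  have hTpos : (0:ℝ) < T := by linarith
  set ε : ℝ := min r1 (Real.exp (-T)) with hεdef
  have hε0 : 0 < ε := lt_min hr1pos (Real.exp_pos _)
  have hεr : ε ≤ r1 := min_le_left _ _
  have hεexp : ε ≤ Real.exp (-T) := min_le_right _ _
  have hεB : 128 * B * ε ≤ 1 := by
    have h1 : Real.exp (-T) ≤ Real.exp (-(Real.log (128*B))) := by
      apply Real.exp_le_exp.2; linarith
    have h2 : Real.exp (-(Real.log (128*B))) = (128*B)⁻¹ := by
      rw [Real.exp_neg, Real.exp_log (by linarith)]
    have h3 : ε ≤ (128*B)⁻¹ := by rw [← h2]; exact hεexp.trans h1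
    calc 128 * B * ε ≤ 128 * B * (128*B)⁻¹ := by
          apply mul_le_mul_of_nonneg_left h3 (by linarith)
      _ = 1 := by field_simp
  have hBε : B * ε ≤ 1/2 := by nlinarith
  have hlogε : Real.log ε ≤ -T := by
    calc Real.log ε ≤ Real.log (Real.exp (-T)) := Real.log_le_log hε0 hεexp
      _ = -T := Real.log_exp _
  -- main key lemma
  have key : ∀ w1 w2 : ℂ,
      (0 < ‖w1‖ ∧ ‖w1‖ ≤ ε ∧ 0 ≤ w1.im) →
      (0 < ‖w2‖ ∧ ‖w2‖ ≤ ε ∧ 0 ≤ w2.im) →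
      ‖Complex.log w1‖ ≤ ‖Complex.log w2‖ →
      fRep a c w1 = fRep a c w2 → w1 = w2 := by
    intro w1 w2 ⟨hw1p, hw1ε, hw1im⟩ ⟨hw2p, hw2ε, hw2im⟩ hle hf
    have hw1ne : w1 ≠ 0 := norm_pos_iff.1 hw1p
    have hw2ne : w2 ≠ 0 := norm_pos_iff.1 hw2p
    set L1 : ℂ := Complex.log w1 with hL1def
    set L2 : ℂ := Complex.log w2 with hL2def
    have hre1 : L1.re ≤ Real.log ε := by
      rw [hL1def, Complex.log_re]
      exact Real.log_le_log hw1p hw1ε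
    have hre2 : L2.re ≤ Real.log ε := by
      rw [hL2def, Complex.log_re]
      exact Real.log_le_log hw2p hw2ε
    have hre1T : L1.re ≤ -T := hre1.trans hlogε
    have hre2T : L2.re ≤ -T := hre2.trans hlogε
    have him1 : L1.im ≤ Real.pi := by rw [hL1def, Complex.log_im]; exact Complex.arg_le_pi _
    have him1' : 0 ≤ L1.im := by
      rw [hL1def, Complex.log_im]; exact Complex.arg_nonneg_iff.2 hw1im
    have him2 : L2.im ≤ Real.pi := by rw [hL2def, Complex.log_im]; exact Complex.arg_le_pi _
    set T0 : ℝ := min (-L1.re) (-L2.re) with hT0def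
    have hTT0 : T ≤ T0 := le_min (by linarith) (by linarith)
    have hT0pos : 0 < T0 := lt_of_lt_of_le hTpos hTT0
    have habsL1ge : T0 ≤ ‖L1‖ := by
      calc T0 ≤ -L1.re := min_le_left _ _
        _ ≤ |L1.re| := neg_le_abs _
        _ ≤ ‖L1‖ := Complex.abs_re_le_norm _
    have habsL2ge : T0 ≤ ‖L2‖ := by
      calc T0 ≤ -L2.re := min_le_right _ _
        _ ≤ |L2.re| := neg_le_abs _
        _ ≤ ‖L2‖ := Complex.abs_re_le_norm _
    have hL1ne : L1 ≠ 0 := by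
      intro h0
      rw [h0] at habsL1ge; simp at habsL1ge; linarith
    have hL2ne : L2 ≠ 0 := by
      intro h0
      rw [h0] at habsL2ge; simp at habsL2ge; linarith
    have habsL1le : ‖L1‖ ≤ T0 + Real.pi := by
      have e1 : ‖L1‖ ≤ -L1.re + Real.pi := by
        calc ‖L1‖ ≤ |L1.re| + |L1.im| := Complex.norm_le_abs_re_add_abs_im _
          _ = -L1.re + |L1.im| := by rw [abs_of_nonpos (by linarith [Real.pi_pos])]
          _ ≤ -L1.re + Real.pi := by
              have : |L1.im| ≤ Real.pi := abs_le.2 ⟨by linarith [Real.pi_pos], him1⟩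
              linarith
      have e2 : ‖L1‖ ≤ -L2.re + Real.pi := by
        calc ‖L1‖ ≤ ‖L2‖ := hle
          _ ≤ |L2.re| + |L2.im| := Complex.norm_le_abs_re_add_abs_im _
          _ = -L2.re + |L2.im| := by rw [abs_of_nonpos (by linarith [Real.pi_pos])]
          _ ≤ -L2.re + Real.pi := by
              have him2' : 0 ≤ L2.im := by
                rw [hL2def, Complex.log_im]; exact Complex.arg_nonneg_iff.2 hw2im
              have : |L2.im| ≤ Real.pi := abs_le.2 ⟨by linarith [Real.pi_pos], him2⟩
              linarith
      rw [hT0def]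
      rcases le_total (-L1.re) (-L2.re) with hc | hc
      · rw [min_eq_left hc]; exact e1
      · rw [min_eq_right hc]; exact e2
    -- the series S_i
    set t1 : ℕ → ℂ := fun n => Phi c (n+1) w1 / L1 ^ (n+1) with ht1def
    set t2 : ℕ → ℂ := fun n => Phi c (n+1) w2 / L2 ^ (n+1) with ht2def
    set S1 : ℂ := ∑' n, t1 n with hS1def
    set S2 : ℂ := ∑' n, t2 n with hS2def
    have hq : M / T0 ≤ 1/64 := by
      rw [div_le_iff₀ hT0pos]
      nlinarith
    have hqpos : 0 ≤ M / T0 := by positivity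
    have ht1abs : ∀ n : ℕ, ‖t1 n‖ ≤ (M/T0) ^ (n+1) := by
      intro n
      rw [ht1def]
      simp only [norm_div, norm_pow]
      rw [div_pow]
      apply div_le_div₀ (by positivity)
        (habsPhi (n+1) (by omega) w1 (hw1ε.trans hεr) hw1im)
        (by positivity)
        (pow_le_pow_left₀ hT0pos.le habsL1ge _)
    have ht2abs : ∀ n : ℕ, ‖t2 n‖ ≤ (M/T0) ^ (n+1) := by
      intro n
      rw [ht2def]
      simp only [norm_div, norm_pow]
      rw [div_pow]
      apply div_le_div₀ (by positivity)
        (habsPhi (n+1) (by omega) w2 (hw2ε.trans hεr) hw2im)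
        (by positivity)
        (pow_le_pow_left₀ hT0pos.le habsL2ge _)
    have hqsummand : Summable (fun n : ℕ => (M/T0) ^ (n+1)) := by
      have : Summable (fun n : ℕ => (M/T0) * (M/T0) ^ n) :=
        (summable_geometric_of_lt_one hqpos (by linarith)).mul_left _
      simpa [pow_succ, mul_comm] using this
    have hqtsum : ∑' n : ℕ, (M/T0) ^ (n+1) ≤ 2 * (M/T0) := by
      have heq : ∑' n : ℕ, (M/T0) ^ (n+1) = (M/T0) * ∑' n : ℕ, (M/T0) ^ n := by
        rw [← tsum_mul_left]
        congr 1; funext n; rw [pow_succ]; ring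
      rw [heq, tsum_geometric_of_lt_one hqpos (by linarith)]
      rw [mul_comm 2 (M/T0)]
      apply mul_le_mul_of_nonneg_left _ hqpos
      rw [inv_le_comm₀ (by linarith) (by norm_num)]
      linarith
    have hsum1 : Summable t1 :=
      Summable.of_norm (hqsummand.of_nonneg_of_le (fun n => norm_nonneg _) ht1abs)
    have hsum2 : Summable t2 :=
      Summable.of_norm (hqsummand.of_nonneg_of_le (fun n => norm_nonneg _) ht2abs)
    have hS1abs : ‖S1‖ ≤ 2 * (M/T0) :=
      le_trans (abs_tsum_le hqsummand ht1abs) hqtsum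
    have hS2abs : ‖S2‖ ≤ 2 * (M/T0) :=
      le_trans (abs_tsum_le hqsummand ht2abs) hqtsum
    have hS1small : ‖S1‖ ≤ 1/2 := by
      calc ‖S1‖ ≤ 2 * (M/T0) := hS1abs
        _ ≤ 2 * (1/64) := by linarith
        _ ≤ 1/2 := by norm_num
    have h1S1 : 1/2 ≤ ‖1 + S1‖ := by
      have h : ‖(1+S1) + (-S1)‖ ≤ ‖1+S1‖ + ‖-S1‖ :=
        norm_add_le _ _
      rw [norm_neg] at h
      rw [show (1+S1) + (-S1) = 1 by ring, norm_one] at h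
      linarith
    -- the functional equation
    have haC : (a:ℂ) ≠ 0 := Complex.ofReal_ne_zero.2 (ne_of_gt ha)
    have hπC : ((Real.pi:ℝ):ℂ) ≠ 0 := Complex.ofReal_ne_zero.2 Real.pi_ne_zero
    have h_eq : (-(2 * (Real.pi : ℂ)) / ((a : ℂ) * L1)) * (1 + S1)
        = (-(2 * (Real.pi : ℂ)) / ((a : ℂ) * L2)) * (1 + S2) := hf
    have heq2 : L2 * (1 + S1) = L1 * (1 + S2) := by
      have hne1 : (a:ℂ)*L1 ≠ 0 := mul_ne_zero haC hL1ne
      have hne2 : (a:ℂ)*L2 ≠ 0 := mul_ne_zero haC hL2ne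
      rw [div_mul_eq_mul_div, div_mul_eq_mul_div, div_eq_div_iff hne1 hne2] at h_eq
      have hfac : -(2*(Real.pi:ℂ)) * (a:ℂ) ≠ 0 :=
        mul_ne_zero (neg_ne_zero.2 (mul_ne_zero two_ne_zero hπC)) haC
      apply mul_left_cancel₀ hfac
      linear_combination h_eq
    have hkey_eq : (L2 - L1) * (1 + S1) = L1 * (S2 - S1) := by linear_combination heq2
    -- distance in the z-plane controlled by distance in the log-plane
    have d0 : (0:ℝ) ≤ ‖L2 - L1‖ := norm_nonneg _
    have hwdiff : ‖w2 - w1‖ ≤ ε * ‖L2 - L1‖ := by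
      have h := exp_diff_bound (t := Real.log ε) hre2 hre1
      rw [Real.exp_log hε0] at h
      rw [hL1def, hL2def, Complex.exp_log hw2ne, Complex.exp_log hw1ne] at h
      rwa [← hL1def, ← hL2def] at h
    have hT0two : (2:ℝ) ≤ T0 := by linarith
    have hT0half : T0⁻¹ ≤ 1/2 := by
      rw [inv_le_comm₀ (by positivity) (by norm_num)]
      linarith
    have hre1T0 : L1.re ≤ -T0 := by
      have h := min_le_left (-L1.re) (-L2.re)
      rw [← hT0def] at h; linarith
    have hre2T0 : L2.re ≤ -T0 := by
      have h := min_le_right (-L1.re) (-L2.re)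
      rw [← hT0def] at h; linarith
    -- termwise bound for the difference of the two series
    have hterm : ∀ n : ℕ, ‖t2 n - t1 n‖ ≤
        ((4*B*ε/T0) * ((1:ℝ)/2)^n + (M/T0^2) * (((n:ℝ)+1) * ((1:ℝ)/2)^n))
          * ‖L2 - L1‖ := by
      intro n
      have hsplit : t2 n - t1 n
          = (Phi c (n+1) w2 - Phi c (n+1) w1) * (L2 ^ (n+1))⁻¹
            + Phi c (n+1) w1 * ((L2 ^ (n+1))⁻¹ - (L1 ^ (n+1))⁻¹) := by
        rw [ht2def, ht1def]
        simp only
        rw [div_eq_mul_inv, div_eq_mul_inv]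
        ring
      have part1 : ‖(Phi c (n+1) w2 - Phi c (n+1) w1) * (L2 ^ (n+1))⁻¹‖
          ≤ (4*B*ε/T0) * ((1:ℝ)/2)^n * ‖L2 - L1‖ := by
        rw [norm_mul]
        have hp : ‖Phi c (n+1) w2 - Phi c (n+1) w1‖
            ≤ 4*B*(ε*‖L2-L1‖) := by
          have hpd := phi_diff_bound hB1 hBε hε0.le
            (fun k hk => hcoef (n+1) (by omega) k hk) hw2ε hw1ε
          calc ‖Phi c (n+1) w2 - Phi c (n+1) w1‖
              ≤ 4*B*‖w2 - w1‖ := by simpa [Phi] using hpd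
            _ ≤ 4*B*(ε*‖L2-L1‖) := by
                apply mul_le_mul_of_nonneg_left hwdiff (by positivity)
        have hinv : ‖(L2 ^ (n+1))⁻¹‖ ≤ (T0 ^ (n+1))⁻¹ := by
          rw [norm_inv, norm_pow]
          exact inv_anti₀ (by positivity)
            (pow_le_pow_left₀ hT0pos.le habsL2ge _)
        calc ‖Phi c (n+1) w2 - Phi c (n+1) w1‖ * ‖(L2 ^ (n+1))⁻¹‖
            ≤ (4*B*(ε*‖L2-L1‖)) * (T0 ^ (n+1))⁻¹ := by
              apply mul_le_mul hp hinv (norm_nonneg _) (by positivity)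
          _ ≤ (4*B*(ε*‖L2-L1‖)) * (T0⁻¹ * ((1:ℝ)/2)^n) := by
              apply mul_le_mul_of_nonneg_left _ (by positivity)
              rw [← inv_pow, pow_succ, mul_comm ((T0⁻¹)^n) (T0⁻¹)]
              apply mul_le_mul_of_nonneg_left _ (by positivity)
              exact pow_le_pow_left₀ (by positivity) hT0half n
          _ = (4*B*ε/T0) * ((1:ℝ)/2)^n * ‖L2 - L1‖ := by
              rw [div_eq_mul_inv]; ring
      have part2 : ‖Phi c (n+1) w1 * ((L2 ^ (n+1))⁻¹ - (L1 ^ (n+1))⁻¹)‖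
          ≤ (M/T0^2) * (((n:ℝ)+1) * ((1:ℝ)/2)^n) * ‖L2 - L1‖ := by
        rw [norm_mul]
        have hphi1 : ‖Phi c (n+1) w1‖ ≤ M^(n+1) :=
          habsPhi (n+1) (by omega) w1 (hw1ε.trans hεr) hw1im
        have hinv := inv_pow_diff_bound hT0pos n hre2T0 hre1T0
        calc ‖Phi c (n+1) w1‖ * ‖(L2 ^ (n+1))⁻¹ - (L1 ^ (n+1))⁻¹‖
            ≤ M^(n+1) * (((n:ℝ)+1)/T0^(n+2) * ‖L2 - L1‖) := by
              apply mul_le_mul hphi1 hinv (norm_nonneg _) (by positivity)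
          _ = (M^(n+1) * (((n:ℝ)+1)/T0^(n+2))) * ‖L2 - L1‖ := by ring
          _ ≤ (M/T0^2) * (((n:ℝ)+1) * ((1:ℝ)/2)^n) * ‖L2 - L1‖ := by
              apply mul_le_mul_of_nonneg_right _ d0
              have hrw : M^(n+1) * (((n:ℝ)+1)/T0^(n+2))
                  = (M/T0^2) * (((n:ℝ)+1) * (M/T0)^n) := by
                have hT0ne : T0 ≠ 0 := hT0pos.ne'
                rw [div_pow]
                field_simp
                ring
              rw [hrw]
              apply mul_le_mul_of_nonneg_left _ (by positivity)
              apply mul_le_mul_of_nonneg_left _ (by positivity)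
              exact pow_le_pow_left₀ hqpos (by linarith) n
      calc ‖t2 n - t1 n‖
          = ‖(Phi c (n+1) w2 - Phi c (n+1) w1) * (L2 ^ (n+1))⁻¹
              + Phi c (n+1) w1 * ((L2 ^ (n+1))⁻¹ - (L1 ^ (n+1))⁻¹)‖ := by rw [hsplit]
        _ ≤ ‖(Phi c (n+1) w2 - Phi c (n+1) w1) * (L2 ^ (n+1))⁻¹‖
              + ‖Phi c (n+1) w1 * ((L2 ^ (n+1))⁻¹ - (L1 ^ (n+1))⁻¹)‖ :=
            norm_add_le _ _
        _ ≤ (4*B*ε/T0) * ((1:ℝ)/2)^n * ‖L2 - L1‖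
              + (M/T0^2) * (((n:ℝ)+1) * ((1:ℝ)/2)^n) * ‖L2 - L1‖ :=
            add_le_add part1 part2
        _ = ((4*B*ε/T0) * ((1:ℝ)/2)^n + (M/T0^2) * (((n:ℝ)+1) * ((1:ℝ)/2)^n))
              * ‖L2 - L1‖ := by ring
    have hgsummable : Summable (fun n : ℕ =>
        ((4*B*ε/T0) * ((1:ℝ)/2)^n + (M/T0^2) * (((n:ℝ)+1) * ((1:ℝ)/2)^n))
          * ‖L2 - L1‖) := by
      apply Summable.mul_right
      exact (geom_half_summable.mul_left _).add (succ_mul_geom_half_summable.mul_left _)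
    have hSdiff : ‖S2 - S1‖
        ≤ (8*B*ε/T0 + 4*M/T0^2) * ‖L2 - L1‖ := by
      have hdiffeq : S2 - S1 = ∑' n, (t2 n - t1 n) := by
        rw [hS1def, hS2def, ← Summable.tsum_sub hsum2 hsum1]
      rw [hdiffeq]
      refine (abs_tsum_le hgsummable hterm).trans ?_
      rw [tsum_mul_right,
        Summable.tsum_add (geom_half_summable.mul_left _) (succ_mul_geom_half_summable.mul_left _),
        tsum_mul_left, tsum_mul_left, geom_half_tsum, succ_mul_geom_half_tsum]
      apply mul_le_mul_of_nonneg_right _ d0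
      apply le_of_eq
      ring
    -- conclusion
    have habseq : ‖L2 - L1‖ * ‖1 + S1‖
        = ‖L1‖ * ‖S2 - S1‖ := by
      rw [← norm_mul, ← norm_mul, hkey_eq]
    have hπpos := Real.pi_pos
    have hc1 : (T0 + Real.pi) * (8*B*ε/T0 + 4*M/T0^2) ≤ 1/4 := by
      have hX : (0:ℝ) ≤ 8*B*ε/T0 + 4*M/T0^2 := by
        apply add_nonneg
        · apply div_nonneg (mul_nonneg (by linarith) hε0.le) hT0pos.le
        · apply div_nonneg (by linarith) (by positivity)
      have e1 : T0 + Real.pi ≤ 2*T0 := by linarith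
      calc (T0 + Real.pi) * (8*B*ε/T0 + 4*M/T0^2)
          ≤ 2*T0 * (8*B*ε/T0 + 4*M/T0^2) := mul_le_mul_of_nonneg_right e1 hX
        _ = 16*B*ε + 8*M/T0 := by field_simp; ring
        _ ≤ 1/8 + 1/8 := by
            apply add_le_add
            · linarith
            · rw [div_le_iff₀ hT0pos]; linarith
        _ = 1/4 := by norm_num
    have hfinal : ‖L2 - L1‖ * (1/2) ≤ (1/4) * ‖L2 - L1‖ := by
      calc ‖L2 - L1‖ * (1/2)
          ≤ ‖L2 - L1‖ * ‖1 + S1‖ :=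
            mul_le_mul_of_nonneg_left h1S1 d0
        _ = ‖L1‖ * ‖S2 - S1‖ := habseq
        _ ≤ (T0 + Real.pi) * ((8*B*ε/T0 + 4*M/T0^2) * ‖L2 - L1‖) := by
            apply mul_le_mul habsL1le hSdiff (norm_nonneg _) (by positivity)
        _ = ((T0 + Real.pi) * (8*B*ε/T0 + 4*M/T0^2)) * ‖L2 - L1‖ := by ring
        _ ≤ (1/4) * ‖L2 - L1‖ := mul_le_mul_of_nonneg_right hc1 d0
    have hdzero : ‖L2 - L1‖ = 0 := by linarith
    have hL1L2 : L1 = L2 := by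
      have : L2 - L1 = 0 := norm_eq_zero.1 hdzero
      linear_combination -this
    calc w1 = Complex.exp (Complex.log w1) := (Complex.exp_log hw1ne).symm
      _ = Complex.exp (Complex.log w2) := by rw [← hL1def, ← hL2def, hL1L2]
      _ = w2 := Complex.exp_log hw2ne
  refine ⟨ε, hε0, ?_⟩
  intro z1 h1 z2 h2 hf
  simp only [Set.mem_setOf_eq] at h1 h2
  rcases le_total (‖Complex.log z1‖) (‖Complex.log z2‖) with h | h
  · exact key z1 z2 h1 h2 h hf
  · exact (key z2 z1 h2 h1 h hf.symm).symm
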